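/- Any inequality from the Hi-Lo construction for the class m = (0,0,0) over 𝔽_3 applied to the all-ones ternary SPC code of length d ≥ 3 (i) cuts exactly d+1 vectors ζ ∈ 𝔽_3^d \ C, i.e., satisfies θ·F_v(ζ) > κ for exactly d+1 such ζ, and (ii) is tight (θ·F_v(c) = κ) for exactly d(d+1)/2 codewords c ∈ C. -/

import Mathlib

/-- Building block entries for `p = 3`, `m = (0,0,0)`:
`t_{k,j} = [j+k]_ℤ - [k]_ℤ` (so `t_0 = (0,1,2)`, `t_1 = (0,1,-1)`, `t_2 = (0,-2,-1)`). -/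
def t3 (k j : ZMod 3) : ℤ := ((j + k).val : ℤ) - (k.val : ℤ)

/-- count of `x : Fin n → ZMod 3` with digit sum `j` -/
def cnt (n j : ℕ) : ℕ :=
  (Finset.univ.filter (fun x : Fin n → ZMod 3 => ∑ i, (x i).val = j)).card

lemma inner_card (n j : ℕ) (a : ZMod 3) :
    (Finset.univ.filter (fun y : Fin n → ZMod 3 => a.val + ∑ i, (y i).val = j)).card
      = if a.val ≤ j then cnt n (j - a.val) else 0 := by
  split
  · unfold cnt
    congr 1
    ext y
    simp only [Finset.mem_filter, Finset.mem_univ, true_and]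
    omega
  · rw [Finset.card_eq_zero, Finset.filter_eq_empty_iff]
    intro y _
    omega

lemma cnt_succ (n j : ℕ) :
    cnt (n+1) j = ∑ a : ZMod 3,
      (Finset.univ.filter (fun y : Fin n → ZMod 3 => a.val + ∑ i, (y i).val = j)).card := by
  unfold cnt
  have h := Fintype.sum_equiv (Fin.consEquiv (fun _ : Fin (n+1) => ZMod 3))
    (fun p : ZMod 3 × (Fin n → ZMod 3) =>
      if p.1.val + ∑ i, (p.2 i).val = j then (1:ℕ) else 0)
    (fun x : Fin (n+1) → ZMod 3 => if ∑ i, (x i).val = j then (1:ℕ) else 0)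
    (by
      intro p
      simp [Fin.consEquiv, Fin.sum_univ_succ])
  rw [Finset.card_filter, ← h, Fintype.sum_prod_type]
  exact Finset.sum_congr rfl (fun a _ => (Finset.card_filter _ _).symm)

lemma zmod3_sum (f : ZMod 3 → ℕ) : ∑ a, f a = f 0 + f 1 + f 2 := by
  show ∑ a : Fin 3, f a = _
  exact Fin.sum_univ_three (fun a : Fin 3 => f a)

lemma cnt_vals (n : ℕ) : cnt n 0 = 1 ∧ cnt n 1 = n ∧ cnt n 2 = n * (n+1) / 2 := by
  induction n with
  | zero => refine ⟨by decide, by decide, by decide⟩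
  | succ n ih =>
    obtain ⟨h0, h1, h2⟩ := ih
    have e : ∀ j, cnt (n+1) j =
        (if (0:ZMod 3).val ≤ j then cnt n (j - (0:ZMod 3).val) else 0)
        + (if (1:ZMod 3).val ≤ j then cnt n (j - (1:ZMod 3).val) else 0)
        + (if (2:ZMod 3).val ≤ j then cnt n (j - (2:ZMod 3).val) else 0) := by
      intro j
      rw [cnt_succ, zmod3_sum (fun a =>
        (Finset.univ.filter (fun y : Fin n → ZMod 3 => a.val + ∑ i, (y i).val = j)).card)]
      rw [inner_card, inner_card, inner_card]
    have v0 : (0:ZMod 3).val = 0 := rfl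
    have v1 : (1:ZMod 3).val = 1 := rfl
    have v2 : (2:ZMod 3).val = 2 := rfl
    have e0 : cnt (n+1) 0 = 1 := by rw [e 0]; simp [v0, v1, v2, h0]
    have e1 : cnt (n+1) 1 = n + 1 := by rw [e 1]; simp [v0, v1, v2, h0, h1]
    have e2 : cnt (n+1) 2 = (n+1) * (n+2) / 2 := by
      rw [e 2]; simp only [v0, v1, v2]
      norm_num [h0, h1, h2]
      have d1 : 2 * (n * (n+1) / 2) = n * (n+1) :=
        Nat.mul_div_cancel' (even_iff_two_dvd.mp (Nat.even_mul_succ_self n))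
      have d2 : 2 * ((n+1) * (n+2) / 2) = (n+1) * (n+2) :=
        Nat.mul_div_cancel' (even_iff_two_dvd.mp (Nat.even_mul_succ_self (n+1)))
      have key : (n+1) * (n+2) = n * (n+1) + 2 * (n+1) := by ring
      omega
    exact ⟨e0, e1, e2⟩

lemma cnt_le_one (n : ℕ) :
    (Finset.univ.filter (fun x : Fin n → ZMod 3 => ∑ i, (x i).val ≤ 1)).card = n + 1 := by
  obtain ⟨h0, h1, -⟩ := cnt_vals n
  have hsplit : (Finset.univ.filter (fun x : Fin n → ZMod 3 => ∑ i, (x i).val ≤ 1))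
      = (Finset.univ.filter (fun x : Fin n → ZMod 3 => ∑ i, (x i).val = 0))
        ∪ (Finset.univ.filter (fun x : Fin n → ZMod 3 => ∑ i, (x i).val = 1)) := by
    rw [← Finset.filter_or]
    apply Finset.filter_congr
    intro x _
    constructor
    · intro h; omega
    · intro h; omega
  rw [hsplit, Finset.card_union_of_disjoint]
  · unfold cnt at h0 h1; rw [h0, h1, Nat.add_comm]
  · rw [Finset.disjoint_left]
    intro a ha hb
    simp only [Finset.mem_filter] at ha hb
    omega

/-- a Hi-Lo inequality for the class `m = (0,0,0)` over `𝔽_3` and the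
all-ones ternary SPC code of length `d ≥ 3` cuts exactly `d+1` non-codewords and is
tight for exactly `d(d+1)/2` codewords. -/
theorem stmt17 (d : ℕ) (hd : 3 ≤ d) (k : Fin d → ZMod 3)
    (hk : (∑ i, k i) = ((d - 1 : ℕ) : ZMod 3) * 2)
    (κ : ℤ) (hκ : κ = 2 * ((d : ℤ) - 1) - ∑ i, ((k i).val : ℤ)) :
    {ζ : Fin d → ZMod 3 | (∑ i, ζ i) ≠ 0 ∧ κ < ∑ i, t3 (k i) (ζ i)}.ncard = d + 1 ∧
    {c : Fin d → ZMod 3 | (∑ i, c i) = 0 ∧ (∑ i, t3 (k i) (c i)) = κ}.ncard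
      = d * (d + 1) / 2 := by
  set Φ : (Fin d → ZMod 3) → (Fin d → ZMod 3) := fun ζ i => 2 - ζ i - k i with hΦ
  have hΦΦ : ∀ ζ, Φ (Φ ζ) = ζ := by
    intro ζ; funext i; simp only [Φ]; ring
  have hval2 : ∀ a : ZMod 3, ((2 - a).val : ℤ) = 2 - (a.val : ℤ) := by decide
  have key : ∀ ζ : Fin d → ZMod 3,
      (((∑ i, ζ i) ≠ 0 ∧ κ < ∑ i, t3 (k i) (ζ i)) ↔ (∑ i, ((Φ ζ) i).val) ≤ 1)
    ∧ (((∑ i, ζ i) = 0 ∧ (∑ i, t3 (k i) (ζ i)) = κ) ↔ (∑ i, ((Φ ζ) i).val) = 2) := by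
    intro ζ
    set s : ℕ := ∑ i, ((Φ ζ) i).val with hs
    have h1 : ∑ i, t3 (k i) (ζ i) = (2 * d - s) - ∑ i, ((k i).val : ℤ) := by
      unfold t3
      rw [Finset.sum_sub_distrib]
      congr 1
      have hpt : ∀ i, ((ζ i + k i).val : ℤ) = 2 - (((Φ ζ) i).val : ℤ) := by
        intro i
        have hx : (Φ ζ) i = 2 - (ζ i + k i) := by simp only [Φ]; ring
        rw [hx, hval2]; ring
      rw [Finset.sum_congr rfl (fun i _ => hpt i), Finset.sum_sub_distrib,
        Finset.sum_const, Finset.card_univ, Fintype.card_fin]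
      push_cast [hs]
      ring
    have hcut : (κ < ∑ i, t3 (k i) (ζ i)) ↔ s ≤ 1 := by
      rw [h1, hκ]; omega
    have heq : ((∑ i, t3 (k i) (ζ i)) = κ) ↔ s = 2 := by
      rw [h1, hκ]; omega
    have hsum3 : (∑ i, ζ i) = 2 - (s : ZMod 3) := by
      have hζ : ∀ i, ζ i = 2 - (Φ ζ) i - k i := by
        intro i; simp only [Φ]; ring
      have hSx : (∑ i, (Φ ζ) i) = (s : ZMod 3) := by
        rw [hs, Nat.cast_sum]
        exact Finset.sum_congr rfl (fun i _ => by
          simp [ZMod.natCast_val, ZMod.cast_id])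
      have hSk : (∑ i, k i) = ((d : ZMod 3) - 1) * 2 := by
        have hc : ((d - 1 : ℕ) : ZMod 3) = (d : ZMod 3) - 1 := by
          rw [Nat.cast_sub (by omega : 1 ≤ d), Nat.cast_one]
        rw [hk, hc]
      calc (∑ i, ζ i) = ∑ i, (2 - (Φ ζ) i - k i) :=
            Finset.sum_congr rfl (fun i _ => hζ i)
        _ = (d : ZMod 3) * 2 - (∑ i, (Φ ζ) i) - ∑ i, k i := by
            rw [Finset.sum_sub_distrib, Finset.sum_sub_distrib,
              Finset.sum_const, Finset.card_univ, Fintype.card_fin, nsmul_eq_mul]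
        _ = 2 - (s : ZMod 3) := by rw [hSx, hSk]; ring
    constructor
    · constructor
      · rintro ⟨-, hlt⟩; exact hcut.mp hlt
      · intro hle
        refine ⟨?_, hcut.mpr hle⟩
        rw [hsum3]
        intro hcontra
        have h2s : (2 : ZMod 3) = (s : ZMod 3) := sub_eq_zero.mp hcontra
        interval_cases s <;> revert h2s <;> decide
    · constructor
      · rintro ⟨-, he⟩; exact heq.mp he
      · intro h2
        refine ⟨?_, heq.mpr h2⟩
        rw [hsum3, h2]
        decide
  constructor
  · rw [Set.ncard_eq_toFinset_card']
    rw [show ({ζ : Fin d → ZMod 3 | (∑ i, ζ i) ≠ 0 ∧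
        κ < ∑ i, t3 (k i) (ζ i)} : Set _).toFinset
      = Finset.univ.filter (fun ζ : Fin d → ZMod 3 =>
          (∑ i, ζ i) ≠ 0 ∧ κ < ∑ i, t3 (k i) (ζ i)) from by ext ζ; simp]
    rw [← cnt_le_one d]
    apply Finset.card_bij' (fun ζ _ => Φ ζ) (fun x _ => Φ x)
    · intro ζ hζ
      simp only [Finset.mem_filter, Finset.mem_univ, true_and] at hζ ⊢
      exact ((key ζ).1).mp hζ
    · intro x hx
      simp only [Finset.mem_filter, Finset.mem_univ, true_and] at hx ⊢
      have := ((key (Φ x)).1).mpr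
      rw [hΦΦ x] at this
      exact this hx
    · intro ζ _; exact hΦΦ ζ
    · intro x _; exact hΦΦ x
  · obtain ⟨-, -, h2⟩ := cnt_vals d
    rw [Set.ncard_eq_toFinset_card']
    rw [show ({c : Fin d → ZMod 3 | (∑ i, c i) = 0 ∧
        (∑ i, t3 (k i) (c i)) = κ} : Set _).toFinset
      = Finset.univ.filter (fun c : Fin d → ZMod 3 =>
          (∑ i, c i) = 0 ∧ (∑ i, t3 (k i) (c i)) = κ) from by ext c; simp]
    rw [← h2]
    unfold cnt
    apply Finset.card_bij' (fun ζ _ => Φ ζ) (fun x _ => Φ x)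
    · intro ζ hζ
      simp only [Finset.mem_filter, Finset.mem_univ, true_and] at hζ ⊢
      exact ((key ζ).2).mp hζ
    · intro x hx
      simp only [Finset.mem_filter, Finset.mem_univ, true_and] at hx ⊢
      have := ((key (Φ x)).2).mpr
      rw [hΦΦ x] at this
      exact this hx
    · intro ζ _; exact hΦΦ ζ
    · intro x _; exact hΦΦ x
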